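/- For p ∈ NC(k,l), the adjoint of the linear map T_p: B^{⊗k} → B^{⊗l} (with respect to the inner products induced by ψ^{⊗k} and ψ^{⊗l}) equals T_{p*}, where p* ∈ NC(l,k) is the vertical reflection of p. -/

import Mathlib

open scoped Classical

/-- The `k` upper and `l` lower points of a partition diagram. -/
abbrev Pt (k l : ℕ) := Sum (Fin k) (Fin l)

/-- Position of a point on the boundary circle: upper points left to right,
then lower points right to left. -/
def ptIdx {k l : ℕ} : Pt k l → ℕ :=
  Sum.elim (fun i => (i : ℕ)) (fun j => k + (l - 1 - (j : ℕ)))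

/-- A partition of the `k + l` points (a setoid) is noncrossing if whenever
`a < b < x < y` in the circular order, `a ∼ x` and `b ∼ y` imply `a ∼ b`. -/
def Noncrossing {k l : ℕ} (p : Setoid (Pt k l)) : Prop :=
  ∀ a b x y : Pt k l, ptIdx a < ptIdx b → ptIdx b < ptIdx x → ptIdx x < ptIdx y →
    p.r a x → p.r b y → p.r a b

/-- `b(p)`: number of blocks of a partition. -/
noncomputable def blocks {α : Type*} (p : Setoid α) : ℕ := Nat.card (Quotient p)

/-- The three rows of points appearing in a vertical composition. -/
abbrev X3 (k l w : ℕ) := Sum (Fin k) (Sum (Fin l) (Fin w))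

def upEmb {k l w : ℕ} : Pt k l → X3 k l w := Sum.map id Sum.inl
def loEmb {k l w : ℕ} : Pt l w → X3 k l w := Sum.inr
def outEmb {k l w : ℕ} : Pt k w → X3 k l w := Sum.map id Sum.inr

/-- The partition of the three rows generated by `p` on the two upper rows and
`q` on the two lower rows. -/
def jointSetoid {k l w : ℕ} (p : Setoid (Pt k l)) (q : Setoid (Pt l w)) :
    Setoid (X3 k l w) :=
  Relation.EqvGen.setoid (fun x y =>
    (∃ a b, p.r a b ∧ x = upEmb a ∧ y = upEmb b) ∨
    (∃ a b, q.r a b ∧ x = loEmb a ∧ y = loEmb b))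

/-- Vertical composition `q ∘ p ∈ NC(k,w)` of `p ∈ NC(k,l)` and `q ∈ NC(l,w)`. -/
def compPart {k l w : ℕ} (p : Setoid (Pt k l)) (q : Setoid (Pt l w)) : Setoid (Pt k w) :=
  Setoid.comap outEmb (jointSetoid p q)

/-- `cb(p,q)`: the number of central blocks removed in the composition, i.e. blocks of
the joint partition consisting only of middle points. -/
noncomputable def cb {k l w : ℕ} (p : Setoid (Pt k l)) (q : Setoid (Pt l w)) : ℕ :=
  Nat.card {cls : Quotient (jointSetoid p q) //
    ∀ x : X3 k l w, Quotient.mk (jointSetoid p q) x = cls → ∃ j : Fin l, x = Sum.inr (Sum.inl j)}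

/-- `cy(p,q) = l + b(qp) + cb(p,q) - b(p) - b(q)`: the number of cycles removed. -/
noncomputable def cy {k l w : ℕ} (p : Setoid (Pt k l)) (q : Setoid (Pt l w)) : ℤ :=
  (l : ℤ) + blocks (compPart p q) + cb p q - blocks p - blocks q

def tleft {k l v w : ℕ} : Pt k l → Pt (k + v) (l + w) :=
  Sum.map (Fin.castAdd v) (Fin.castAdd w)

def tright {k l v w : ℕ} : Pt v w → Pt (k + v) (l + w) :=
  Sum.map (Fin.natAdd k) (Fin.natAdd l)

/-- Horizontal concatenation (tensor product) of partitions. -/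
def tensorPart {k l v w : ℕ} (p : Setoid (Pt k l)) (q : Setoid (Pt v w)) :
    Setoid (Pt (k + v) (l + w)) :=
  Relation.EqvGen.setoid (fun x y =>
    (∃ a b, p.r a b ∧ x = tleft a ∧ y = tleft b) ∨
    (∃ a b, q.r a b ∧ x = tright a ∧ y = tright b))

/-- Reflection (adjoint) of a partition, exchanging the upper and lower rows. -/
def adjPart {k l : ℕ} (p : Setoid (Pt k l)) : Setoid (Pt l k) :=
  Setoid.comap Sum.swap p

/-- The multimatrix C*-algebra `B = ⊕_{α} M_{n α}(ℂ)`. -/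
abbrev MAlg (c : ℕ) (n : Fin c → ℕ) := ∀ α : Fin c, Matrix (Fin (n α)) (Fin (n α)) ℂ

/-- The index set of the basis of matrix units of `B`. -/
abbrev Idx (c : ℕ) (n : Fin c → ℕ) := Σ α : Fin c, Fin (n α) × Fin (n α)

/-- The matrix unit `e_{ij}^α` of `B`. -/
def eMat {c : ℕ} {n : Fin c → ℕ} (x : Idx c n) : MAlg c n :=
  Pi.single x.1 (Matrix.single x.2.1 x.2.2 (1 : ℂ))

/-- The rescaled matrix unit `b_{ij}^α = ψ(e_{jj}^α)^{-1/2} e_{ij}^α`, where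
`ψ = ⊕_α Tr(Q_α ·)` with `Q_α` diagonal with entries `Q α i`. -/
noncomputable def bMat {c : ℕ} {n : Fin c → ℕ} (Q : ∀ α, Fin (n α) → ℝ)
    (x : Idx c n) : MAlg c n :=
  ((Real.sqrt (Q x.1 x.2.2) : ℂ))⁻¹ • eMat x

/-- The state `ψ = ⊕_α Tr(Q_α ·)` on `B` (each `Q_α` diagonal with entries `Q α i`). -/
noncomputable def psiMap {c : ℕ} {n : Fin c → ℕ} (Q : ∀ α, Fin (n α) → ℝ)
    (x : MAlg c n) : ℂ :=
  ∑ α, ∑ i, (Q α i : ℂ) * x α i i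

/-- `b_v^↑`: the ordered product of the rescaled matrix units attached to the
upper points of the block `cls` (empty product = 1). -/
noncomputable def upProdB {c : ℕ} {n : Fin c → ℕ} (Q : ∀ α, Fin (n α) → ℝ)
    {k l : ℕ} (p : Setoid (Pt k l)) (up : Fin k → Idx c n) (cls : Quotient p) :
    MAlg c n :=
  (((List.finRange k).filter
      (fun i => decide (Quotient.mk p (Sum.inl i : Pt k l) = cls))).map
    (fun i => bMat Q (up i))).prod

/-- `b_v^↓`: the ordered product of the rescaled matrix units attached to the
lower points of the block `cls` (empty product = 1). -/
noncomputable def loProdB {c : ℕ} {n : Fin c → ℕ} (Q : ∀ α, Fin (n α) → ℝ)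
    {k l : ℕ} (p : Setoid (Pt k l)) (lo : Fin l → Idx c n) (cls : Quotient p) :
    MAlg c n :=
  (((List.finRange l).filter
      (fun j => decide (Quotient.mk p (Sum.inr j : Pt k l) = cls))).map
    (fun j => bMat Q (lo j))).prod

/-- The coefficient `δ_p^{α,β}(ij,rs) = ∏_{blocks v} ψ((b_v^↓)* b_v^↑)`. -/
noncomputable def dcoef {c : ℕ} {n : Fin c → ℕ} (Q : ∀ α, Fin (n α) → ℝ)
    {k l : ℕ} (p : Setoid (Pt k l)) (up : Fin k → Idx c n) (lo : Fin l → Idx c n) : ℂ :=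
  letI : Fintype (Quotient p) := Fintype.ofFinite _
  ∏ cls : Quotient p, psiMap Q (star (loProdB Q p lo cls) * upProdB Q p up cls)

/-- The matrix (in the orthonormal basis of rescaled matrix units of `B^{⊗k}`,
`B^{⊗l}`) of the linear map `T_p : B^{⊗k} → B^{⊗l}` associated to `p`. -/
noncomputable def Tmat {c : ℕ} {n : Fin c → ℕ} (Q : ∀ α, Fin (n α) → ℝ)
    {k l : ℕ} (p : Setoid (Pt k l)) :
    Matrix (Fin l → Idx c n) (Fin k → Idx c n) ℂ :=
  Matrix.of fun lo up => dcoef Q p up lo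

/-- `T_p* = T_{p*}`: the adjoint of `T_p : B^{⊗k} → B^{⊗l}` with respect to the
inner products induced by `ψ^{⊗k}` and `ψ^{⊗l}` (whose matrix, in the orthonormal
bases of rescaled matrix units, is the conjugate transpose) is the map associated
to the reflected partition `p*`. -/
lemma psiMap_star {c : ℕ} {n : Fin c → ℕ} (Q : ∀ α, Fin (n α) → ℝ)
    (M : MAlg c n) : psiMap Q (star M) = star (psiMap Q M) := by
  simp [psiMap, star_sum, star_mul', Pi.star_apply, Matrix.star_apply,
    Complex.star_def, Complex.conj_ofReal]

/-- The bijection between the blocks of `p*` and those of `p`. -/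
def qe {k l : ℕ} (p : Setoid (Pt k l)) : Quotient (adjPart p) ≃ Quotient p :=
  Quotient.congr (Equiv.sumComm (Fin l) (Fin k)) (fun _ _ => Iff.rfl)

lemma qe_mk {k l : ℕ} (p : Setoid (Pt k l)) (a : Pt l k) :
    qe p (Quotient.mk (adjPart p) a) = Quotient.mk p (Sum.swap a) := rfl

lemma upProdB_adj {c : ℕ} {n : Fin c → ℕ} (Q : ∀ α, Fin (n α) → ℝ)
    {k l : ℕ} (p : Setoid (Pt k l)) (y : Fin l → Idx c n)
    (cls : Quotient (adjPart p)) :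
    upProdB Q (adjPart p) y cls = loProdB Q p y (qe p cls) := by
  unfold upProdB loProdB
  congr 2
  apply List.filter_congr
  intro j _
  simp only [decide_eq_decide]
  constructor
  · rintro rfl; rfl
  · intro h
    have := (qe p).injective (a₁ := Quotient.mk (adjPart p) (Sum.inl j)) (a₂ := cls)
    exact this h

lemma loProdB_adj {c : ℕ} {n : Fin c → ℕ} (Q : ∀ α, Fin (n α) → ℝ)
    {k l : ℕ} (p : Setoid (Pt k l)) (x : Fin k → Idx c n)
    (cls : Quotient (adjPart p)) :
    loProdB Q (adjPart p) x cls = upProdB Q p x (qe p cls) := by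
  unfold upProdB loProdB
  congr 2
  apply List.filter_congr
  intro i _
  simp only [decide_eq_decide]
  constructor
  · rintro rfl; rfl
  · intro h
    have := (qe p).injective (a₁ := Quotient.mk (adjPart p) (Sum.inr i)) (a₂ := cls)
    exact this h

theorem Tmat_adjoint {c : ℕ} {n : Fin c → ℕ} (Q : ∀ α, Fin (n α) → ℝ)
    (hQ : ∀ α i, 0 < Q α i) (hnorm : ∑ α, ∑ i, Q α i = 1)
    {k l : ℕ} (p : Setoid (Pt k l)) (hp : Noncrossing p) :
    (Tmat Q p).conjTranspose = Tmat Q (adjPart p) := by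
  ext x y
  show star (dcoef Q p x y) = dcoef Q (adjPart p) y x
  unfold dcoef
  letI : Fintype (Quotient p) := Fintype.ofFinite _
  letI : Fintype (Quotient (adjPart p)) := Fintype.ofFinite _
  rw [star_prod]
  refine Fintype.prod_equiv (qe p).symm _ _ (fun cls => ?_)
  rw [upProdB_adj, loProdB_adj, Equiv.apply_symm_apply, ← psiMap_star]
  congr 1
  rw [star_mul, star_star]
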